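/- The function r ↦ 2·(r/(r+1))^r on (0,∞) is strictly log-convex and converges to 2/e as r → ∞. -/

import Mathlib

open Real Filter Set

noncomputable def g (r : ℝ) : ℝ := Real.log 2 + r * Real.log r - r * Real.log (r + 1)
noncomputable def g' (r : ℝ) : ℝ := Real.log r + 1 - (Real.log (r + 1) + r / (r + 1))
noncomputable def g'' (r : ℝ) : ℝ := 1 / r - (1 / (r + 1) + 1 / (r + 1) ^ 2)

lemma hasDerivAt_g {x : ℝ} (hx : 0 < x) : HasDerivAt g (g' x) x := by
  have hx1 : x + 1 ≠ 0 := by linarith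
  have h1 : HasDerivAt (fun r : ℝ => r * Real.log r) (Real.log x + 1) x := by
    have := (hasDerivAt_id x).mul (Real.hasDerivAt_log hx.ne')
    refine this.congr_deriv ?_
    simp [hx.ne']
  have h2 : HasDerivAt (fun r : ℝ => r * Real.log (r + 1))
      (Real.log (x + 1) + x / (x + 1)) x := by
    have hl : HasDerivAt (fun r : ℝ => Real.log (r + 1)) (1 / (x + 1)) x := by
      have := (Real.hasDerivAt_log hx1).comp x ((hasDerivAt_id x).add_const 1)
      simpa [one_div, Function.comp_def] using this
    have := (hasDerivAt_id x).mul hl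
    refine this.congr_deriv ?_
    simp only [id]; ring
  have := ((h1.const_add (Real.log 2)).sub h2)
  exact this

lemma hasDerivAt_g' {x : ℝ} (hx : 0 < x) : HasDerivAt g' (g'' x) x := by
  have hx1 : (0:ℝ) < x + 1 := by linarith
  have hl : HasDerivAt (fun r : ℝ => Real.log (r + 1)) (1 / (x + 1)) x := by
    have := (Real.hasDerivAt_log hx1.ne').comp x ((hasDerivAt_id x).add_const 1)
    simpa [one_div, Function.comp_def] using this
  have hq : HasDerivAt (fun r : ℝ => r / (r + 1)) (1 / (x + 1) ^ 2) x := by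
    have := (hasDerivAt_id x).div ((hasDerivAt_id x).add_const 1) hx1.ne'
    refine this.congr_deriv ?_
    simp only [id]; ring
  have h1 : HasDerivAt (fun r : ℝ => Real.log r + 1) (1 / x) x := by
    simpa [one_div] using (Real.hasDerivAt_log hx.ne').add_const 1
  have := h1.sub (hl.add hq)
  exact this

lemma g_strictconvex : StrictConvexOn ℝ (Set.Ioi (0 : ℝ)) g := by
  apply strictConvexOn_of_deriv2_pos (convex_Ioi 0)
  · intro x hx
    exact (hasDerivAt_g hx).continuousAt.continuousWithinAt
  · intro x hx
    rw [interior_Ioi] at hx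
    have hd1 : deriv g =ᶠ[nhds x] g' := by
      filter_upwards [Ioi_mem_nhds hx] with y hy
      exact (hasDerivAt_g hy).deriv
    have : deriv (deriv g) x = g'' x := by
      rw [Filter.EventuallyEq.deriv_eq hd1, (hasDerivAt_g' hx).deriv]
    simp only [Function.iterate_succ, Function.iterate_zero, Function.comp_apply, id_eq]
    rw [this, g'']
    have hx0 : (0:ℝ) < x := hx
    have hx1 : (0:ℝ) < x + 1 := by linarith
    have key : 1 / x - (1 / (x + 1) + 1 / (x + 1) ^ 2) = 1 / (x * (x + 1) ^ 2) := by
      field_simp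
      ring
    rw [key]
    positivity

theorem stmt_14 :
    StrictConvexOn ℝ (Set.Ioi (0 : ℝ))
        (fun r : ℝ => Real.log (2 * (r / (r + 1)) ^ r)) ∧
      Filter.Tendsto (fun r : ℝ => 2 * (r / (r + 1)) ^ r) Filter.atTop
        (nhds (2 / Real.exp 1)) := by
  constructor
  · have heq : Set.EqOn (fun r : ℝ => Real.log (2 * (r / (r + 1)) ^ r)) g (Set.Ioi 0) := by
      intro x hx
      have hx : (0:ℝ) < x := hx
      have hx1 : (0:ℝ) < x + 1 := by linarith
      have hq : (0:ℝ) < x / (x + 1) := by positivity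
      simp only [g]
      rw [Real.log_mul (by norm_num) (by positivity),
        Real.log_rpow hq, Real.log_div hx.ne' hx1.ne']
      ring
    exact ⟨g_strictconvex.1, fun x hx y hy hxy a b ha hb hab => by
      rw [heq hx, heq hy, heq (g_strictconvex.1 hx hy ha.le hb.le hab)]
      exact g_strictconvex.2 hx hy hxy ha hb hab⟩
  · have h := (tendsto_one_add_div_rpow_exp 1).inv₀ (Real.exp_pos 1).ne'
    have h2 : Tendsto (fun r : ℝ => 2 * (r / (r + 1)) ^ r) atTop
        (nhds (2 * (Real.exp 1)⁻¹)) := by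
      apply Tendsto.const_mul
      apply h.congr'
      filter_upwards [eventually_gt_atTop (0:ℝ)] with r hr
      have hr1 : (0:ℝ) < r + 1 := by linarith
      have hb : (0:ℝ) ≤ 1 + 1 / r := by positivity
      rw [← Real.inv_rpow hb]
      congr 1
      field_simp
    simpa [div_eq_mul_inv] using h2
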